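/- Let ς > 2, C₀ > 0 and d ≥ 0 an integer, and let γ : ℤ → ℂ satisfy |γ(ℓ)| ≤ C₀(1+|ℓ|)^{−ς} for all ℓ ∈ ℤ. Define σ(ω) = (2π)^{−1} Σ_{ℓ∈ℤ} γ(ℓ) e^{−iℓω} and, for an integer m ≥ 1, the Fourier frequencies ω_l = 2πl/(2m+1) for −m ≤ l ≤ m. Then there exists a constant C_d > 0 depending only on C₀, ς and d such that for every m ≥ 1 and every integer ℓ₀ with |ℓ₀| ≤ d, the discretized inverse Fourier transform satisfies |(2π/(2m+1)) Σ_{l=−m}^m σ(ω_l) e^{iω_l ℓ₀} − γ(ℓ₀)| ≤ C_d/m. -/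

import Mathlib

open scoped Real

noncomputable section

/-- Orthogonality of discrete Fourier characters on `Icc (-m) m`. -/
lemma stmt7_orth (m : ℕ) (k : ℤ) :
    ∑ l ∈ Finset.Icc (-(m : ℤ)) (m : ℤ),
      Complex.exp (Complex.I * ((2 * π * (l : ℝ) / (2 * (m : ℝ) + 1) : ℝ) : ℂ) * (k : ℂ)) =
      if ((2 * (m : ℤ) + 1)) ∣ k then (2 * (m : ℂ) + 1) else 0 := by
  have hN0 : (2 * (m : ℂ) + 1) ≠ 0 := by
    have : (2 * (m : ℂ) + 1) = ((2 * m + 1 : ℕ) : ℂ) := by push_cast; ring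
    rw [this]; exact Nat.cast_ne_zero.mpr (by omega)
  have hπI : (2 * (π : ℂ) * Complex.I) ≠ 0 := by
    simp [Real.pi_ne_zero, Complex.I_ne_zero, Complex.ofReal_ne_zero]
  set ζ : ℂ := Complex.exp (2 * π * Complex.I * k / (2 * (m : ℂ) + 1)) with hζ
  have hζ0 : ζ ≠ 0 := Complex.exp_ne_zero _
  have hterm : ∀ l : ℤ,
      Complex.exp (Complex.I * ((2 * π * (l : ℝ) / (2 * (m : ℝ) + 1) : ℝ) : ℂ) * (k : ℂ))
        = ζ ^ l := by
    intro l
    rw [hζ, ← Complex.exp_int_mul]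
    congr 1
    push_cast
    field_simp
  simp only [hterm]
  by_cases hdvd : ((2 * (m : ℤ) + 1)) ∣ k
  · obtain ⟨t, ht⟩ := hdvd
    have hζ1 : ζ = 1 := by
      rw [hζ, ht]
      rw [show ((((2 * (m:ℤ) + 1) * t : ℤ) : ℂ)) = (2 * (m:ℂ) + 1) * (t : ℂ) by push_cast; ring]
      rw [mul_div_assoc, mul_div_cancel_left₀ _ hN0, mul_comm]
      exact Complex.exp_int_mul_two_pi_mul_I t
    have hcard' : (Finset.Icc (-(m : ℤ)) (m : ℤ)).card = 2 * m + 1 := by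
      rw [Int.card_Icc]; omega
    have hcard : ((Finset.Icc (-(m : ℤ)) (m : ℤ)).card : ℂ) = 2 * (m : ℂ) + 1 := by
      rw [hcard']; push_cast; ring
    simp only [hζ1, one_zpow, Finset.sum_const, nsmul_eq_mul, mul_one]
    rw [if_pos ⟨t, ht⟩, hcard]
  · have hζN : ζ ^ (2 * m + 1 : ℕ) = 1 := by
      rw [hζ, ← Complex.exp_nat_mul]
      rw [show ((2*m+1:ℕ):ℂ) * (2 * ↑π * Complex.I * ↑k / (2 * (m:ℂ) + 1))
          = (2 * ↑π * Complex.I * ↑k / (2 * (m:ℂ) + 1)) * (2 * (m:ℂ) + 1) by push_cast; ring]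
      rw [div_mul_cancel₀ _ hN0, mul_comm]
      exact Complex.exp_int_mul_two_pi_mul_I k
    have hζ1 : ζ ≠ 1 := by
      intro h
      rw [hζ, Complex.exp_eq_one_iff] at h
      obtain ⟨n, hn⟩ := h
      apply hdvd
      have h3 : 2 * (π:ℂ) * Complex.I * k = (n : ℂ) * (2 * π * Complex.I) * (2 * (m:ℂ) + 1) := by
        have := congrArg (fun z => z * (2 * (m:ℂ) + 1)) hn
        simpa [div_mul_cancel₀ _ hN0] using this
      have h4 : (2 * (π:ℂ) * Complex.I) * k
          = (2 * (π:ℂ) * Complex.I) * ((n:ℂ) * (2 * (m:ℂ) + 1)) := by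
        linear_combination h3
      have h5 : (k : ℂ) = (n : ℂ) * (2 * (m:ℂ) + 1) := mul_left_cancel₀ hπI h4
      have : k = n * (2 * (m:ℤ) + 1) := by exact_mod_cast h5
      exact ⟨n, by linarith⟩
    have hre : ∑ l ∈ Finset.Icc (-(m : ℤ)) (m : ℤ), ζ ^ l
        = ∑ j ∈ Finset.range (2*m+1), ζ ^ (-(m:ℤ)) * ζ ^ (j:ℕ) := by
      refine Finset.sum_nbij' (fun l => (l + m).toNat) (fun j => (j : ℤ) - m) ?_ ?_ ?_ ?_ ?_
      · intro l hl; simp only [Finset.mem_Icc] at hl; simp only [Finset.mem_range]; omega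
      · intro j hj; simp only [Finset.mem_range] at hj; simp only [Finset.mem_Icc]; omega
      · intro l hl; simp only [Finset.mem_Icc] at hl; omega
      · intro j hj; simp only [Finset.mem_range] at hj; omega
      · intro l hl
        simp only [Finset.mem_Icc] at hl
        rw [← zpow_natCast ζ ((l + m).toNat), ← zpow_add₀ hζ0]
        congr 1
        omega
    rw [hre, ← Finset.mul_sum, geom_sum_eq hζ1, hζN]
    simp [hdvd]

/-- Summability of the dominating sequence. -/
lemma stmt7_summable_bound (ς C₀ : ℝ) (hς : 2 < ς) (hC₀ : 0 < C₀) :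
    Summable (fun ℓ : ℤ => C₀ * (1 + |(ℓ : ℝ)|) ^ (-ς)) := by
  have h1 : Summable (fun ℓ : ℤ => |(ℓ : ℝ)| ^ (-ς)) :=
    Real.summable_abs_int_rpow (by linarith)
  refine ((h1.mul_left C₀).of_norm_bounded_eventually ?_)
  have : ({0} : Set ℤ).Finite := Set.finite_singleton 0
  filter_upwards [this.compl_mem_cofinite] with ℓ hℓ
  have hℓ0 : (ℓ : ℤ) ≠ 0 := by simpa using hℓ
  have habs : (1:ℝ) ≤ |(ℓ:ℝ)| := by
    have h : (1:ℤ) ≤ |ℓ| := Int.one_le_abs hℓ0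
    calc (1:ℝ) ≤ ((|ℓ| : ℤ) : ℝ) := by exact_mod_cast h
    _ = |(ℓ:ℝ)| := by push_cast; simp
  have h2 : (1 + |(ℓ:ℝ)|) ^ (-ς) ≤ |(ℓ:ℝ)| ^ (-ς) :=
    Real.rpow_le_rpow_of_nonpos (by linarith) (by linarith) (by linarith)
  have h3 : (0:ℝ) ≤ (1 + |(ℓ:ℝ)|) ^ (-ς) := Real.rpow_nonneg (by positivity) _
  have : ‖C₀ * (1 + |(ℓ:ℝ)|) ^ (-ς)‖ = C₀ * (1 + |(ℓ:ℝ)|) ^ (-ς) := by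
    rw [Real.norm_eq_abs, abs_of_nonneg (by positivity)]
  rw [this]
  exact mul_le_mul_of_nonneg_left h2 hC₀.le

lemma stmt7_norm_exp (z : ℂ) (r : ℝ) (h : z = (r:ℂ) * Complex.I) : ‖Complex.exp z‖ = 1 := by
  rw [h]; simp

/-- The quadrature error bound from the proof of Theorem 4.2 of the paper: there is
a constant `C_d` depending only on `C₀`, `ς` and `d` such that the discretized
inverse Fourier transform of the spectral density at the Fourier frequencies
`ω_l = 2πl/(2m+1)` recovers the lag-`ℓ₀` autocovariance up to an error `C_d/m`,
uniformly over `|ℓ₀| ≤ d`. -/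
theorem stmt7 (ς C₀ : ℝ) (hς : 2 < ς) (hC₀ : 0 < C₀) (d : ℕ) :
    ∃ Cd : ℝ, 0 < Cd ∧
      ∀ γ : ℤ → ℂ, (∀ ℓ : ℤ, ‖γ ℓ‖ ≤ C₀ * (1 + |(ℓ : ℝ)|) ^ (-ς)) →
        ∀ m : ℕ, 1 ≤ m → ∀ ℓ₀ : ℤ, |ℓ₀| ≤ (d : ℤ) →
          ‖(2 * (π : ℂ)) / (2 * (m : ℂ) + 1) *
              (∑ l ∈ Finset.Icc (-(m : ℤ)) (m : ℤ),
                ((2 * (π : ℂ))⁻¹ * ∑' ℓ : ℤ, γ ℓ *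
                    Complex.exp
                      (-(Complex.I * (ℓ : ℂ) * ((2 * π * (l : ℝ) / (2 * (m : ℝ) + 1) : ℝ) : ℂ)))) *
                  Complex.exp
                    (Complex.I * ((2 * π * (l : ℝ) / (2 * (m : ℝ) + 1) : ℝ) : ℂ) * (ℓ₀ : ℂ))) -
            γ ℓ₀‖ ≤ Cd / m := by
  have hSsum : Summable (fun k : ℤ => |(k:ℝ)| ^ (-ς)) := Real.summable_abs_int_rpow (by linarith)
  set S : ℝ := ∑' k : ℤ, |(k : ℝ)| ^ (-ς) with hSdef
  have hSpos : 0 < S := by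
    refine Summable.tsum_pos hSsum (fun k => Real.rpow_nonneg (abs_nonneg _) _) 1 ?_
    norm_num
  refine ⟨C₀ * ((d:ℝ) + 1) ^ ς * S, by positivity, ?_⟩
  intro γ hγ m hm ℓ₀ hℓ₀
  have hbd : Summable (fun ℓ : ℤ => C₀ * (1 + |(ℓ:ℝ)|) ^ (-ς)) :=
    stmt7_summable_bound ς C₀ hς hC₀
  have hγsum : Summable γ := by
    refine Summable.of_norm_bounded hbd hγ
  have hNC : (2 * (m : ℂ) + 1) ≠ 0 := by
    have : (2 * (m : ℂ) + 1) = ((2 * m + 1 : ℕ) : ℂ) := by push_cast; ring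
    rw [this]; exact Nat.cast_ne_zero.mpr (by omega)
  have h2π : (2 * (π : ℂ)) ≠ 0 := by
    simp [Real.pi_ne_zero, Complex.ofReal_ne_zero]
  have hinj : Function.Injective (fun k : ℤ => ℓ₀ + k * (2 * (m:ℤ) + 1)) := by
    intro a b h
    simp only [add_right_inj] at h
    exact mul_right_cancel₀ (by omega) h
  -- summability of each inner series
  have hsuml : ∀ l : ℤ, Summable (fun ℓ : ℤ => γ ℓ *
      Complex.exp (Complex.I * ((2 * π * (l : ℝ) / (2 * (m : ℝ) + 1) : ℝ) : ℂ)
        * ((ℓ₀ - ℓ : ℤ) : ℂ))) := by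
    intro l
    refine Summable.of_norm_bounded hbd (fun ℓ => ?_)
    rw [norm_mul, stmt7_norm_exp _ ((2 * π * (l : ℝ) / (2 * (m : ℝ) + 1)) * ((ℓ₀ - ℓ : ℤ) : ℝ))
      (by push_cast; ring), mul_one]
    exact hγ ℓ
  -- Step 1: rewrite each summand
  have hterm : ∀ l ∈ Finset.Icc (-(m : ℤ)) (m : ℤ),
      ((2 * (π : ℂ))⁻¹ * ∑' ℓ : ℤ, γ ℓ *
          Complex.exp (-(Complex.I * (ℓ : ℂ) * ((2 * π * (l : ℝ) / (2 * (m : ℝ) + 1) : ℝ) : ℂ)))) *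
        Complex.exp (Complex.I * ((2 * π * (l : ℝ) / (2 * (m : ℝ) + 1) : ℝ) : ℂ) * (ℓ₀ : ℂ))
      = (2 * (π : ℂ))⁻¹ * ∑' ℓ : ℤ, γ ℓ *
          Complex.exp (Complex.I * ((2 * π * (l : ℝ) / (2 * (m : ℝ) + 1) : ℝ) : ℂ)
            * ((ℓ₀ - ℓ : ℤ) : ℂ)) := by
    intro l _
    rw [mul_assoc, ← tsum_mul_right]
    congr 1
    refine tsum_congr (fun ℓ => ?_)
    rw [mul_assoc, ← Complex.exp_add]
    congr 2
    push_cast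
    ring
  rw [Finset.sum_congr rfl hterm, ← Finset.mul_sum]
  -- Step 2: absorb constants
  rw [show (2 * (π : ℂ)) / (2 * (m : ℂ) + 1) *
      ((2 * (π : ℂ))⁻¹ * ∑ l ∈ Finset.Icc (-(m : ℤ)) (m : ℤ), ∑' ℓ : ℤ, γ ℓ *
          Complex.exp (Complex.I * ((2 * π * (l : ℝ) / (2 * (m : ℝ) + 1) : ℝ) : ℂ)
            * ((ℓ₀ - ℓ : ℤ) : ℂ)))
      = (∑ l ∈ Finset.Icc (-(m : ℤ)) (m : ℤ), ∑' ℓ : ℤ, γ ℓ *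
          Complex.exp (Complex.I * ((2 * π * (l : ℝ) / (2 * (m : ℝ) + 1) : ℝ) : ℂ)
            * ((ℓ₀ - ℓ : ℤ) : ℂ))) / (2 * (m : ℂ) + 1) from by
    field_simp]
  -- Step 3: swap sum and tsum
  rw [show (∑ l ∈ Finset.Icc (-(m : ℤ)) (m : ℤ), ∑' ℓ : ℤ, γ ℓ *
          Complex.exp (Complex.I * ((2 * π * (l : ℝ) / (2 * (m : ℝ) + 1) : ℝ) : ℂ)
            * ((ℓ₀ - ℓ : ℤ) : ℂ)))
      = ∑' ℓ : ℤ, ∑ l ∈ Finset.Icc (-(m : ℤ)) (m : ℤ), γ ℓ *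
          Complex.exp (Complex.I * ((2 * π * (l : ℝ) / (2 * (m : ℝ) + 1) : ℝ) : ℂ)
            * ((ℓ₀ - ℓ : ℤ) : ℂ)) from
    (hasSum_sum (fun l _ => (hsuml l).hasSum)).tsum_eq.symm]
  -- Step 4: orthogonality
  have horth : ∀ ℓ : ℤ, (∑ l ∈ Finset.Icc (-(m : ℤ)) (m : ℤ), γ ℓ *
          Complex.exp (Complex.I * ((2 * π * (l : ℝ) / (2 * (m : ℝ) + 1) : ℝ) : ℂ)
            * ((ℓ₀ - ℓ : ℤ) : ℂ)))
      = γ ℓ * (if ((2 * (m : ℤ) + 1)) ∣ (ℓ₀ - ℓ) then (2 * (m : ℂ) + 1) else 0) := by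
    intro ℓ
    rw [← Finset.mul_sum, stmt7_orth m (ℓ₀ - ℓ)]
  rw [tsum_congr horth, ← tsum_div_const]
  have hite : ∀ ℓ : ℤ, γ ℓ * (if ((2 * (m : ℤ) + 1)) ∣ (ℓ₀ - ℓ) then (2 * (m : ℂ) + 1) else 0)
        / (2 * (m : ℂ) + 1)
      = if ((2 * (m : ℤ) + 1)) ∣ (ℓ₀ - ℓ) then γ ℓ else 0 := by
    intro ℓ
    split_ifs with h
    · rw [mul_div_assoc, div_self hNC, mul_one]
    · simp
  rw [tsum_congr hite]
  -- Step 5: reindex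
  have hsupp : Function.support
      (fun ℓ : ℤ => if ((2 * (m : ℤ) + 1)) ∣ (ℓ₀ - ℓ) then γ ℓ else 0)
      ⊆ Set.range (fun k : ℤ => ℓ₀ + k * (2 * (m:ℤ) + 1)) := by
    intro ℓ hℓ
    simp only [Function.mem_support, ne_eq, ite_eq_right_iff, not_forall] at hℓ
    obtain ⟨⟨t, ht⟩, -⟩ := hℓ
    exact ⟨-t, by simp; linarith⟩
  rw [← hinj.tsum_eq hsupp]
  have hval : ∀ k : ℤ, (if ((2 * (m : ℤ) + 1)) ∣ (ℓ₀ - (ℓ₀ + k * (2 * (m:ℤ) + 1))) then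
        γ (ℓ₀ + k * (2 * (m:ℤ) + 1)) else 0) = γ (ℓ₀ + k * (2 * (m:ℤ) + 1)) := by
    intro k
    rw [if_pos ⟨-k, by ring⟩]
  rw [tsum_congr hval]
  -- Step 6: subtract γ ℓ₀
  have hγc : Summable (fun k : ℤ => γ (ℓ₀ + k * (2 * (m:ℤ) + 1))) := hγsum.comp_injective hinj
  rw [hγc.tsum_eq_add_tsum_ite 0]
  rw [show ℓ₀ + 0 * (2 * (m:ℤ) + 1) = ℓ₀ by ring, add_sub_cancel_left]
  -- Step 7: norm bound
  have hm1 : (1:ℝ) ≤ (m:ℝ) := by exact_mod_cast hm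
  have hd0 : (0:ℝ) ≤ (d:ℝ) := Nat.cast_nonneg d
  have hbound : ∀ k : ℤ,
      ‖(if k = 0 then 0 else γ (ℓ₀ + k * (2 * (m:ℤ) + 1)))‖
        ≤ (C₀ * ((d:ℝ) + 1) ^ ς / m) * |(k:ℝ)| ^ (-ς) := by
    intro k
    by_cases hk : k = 0
    · simp [hk, Real.zero_rpow (by linarith : -ς ≠ 0)]
    · rw [if_neg hk]
      set a : ℝ := |(k:ℝ)| with ha
      set X : ℝ := |((ℓ₀ + k * (2 * (m:ℤ) + 1) : ℤ) : ℝ)| with hX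
      have hk1 : (1:ℝ) ≤ a := by
        have h := Int.one_le_abs hk
        rw [ha]
        calc (1:ℝ) ≤ ((|k| : ℤ) : ℝ) := by exact_mod_cast h
        _ = |(k:ℝ)| := by push_cast; simp
      have hX0 : 0 ≤ X := abs_nonneg _
      have hdℝ : |((ℓ₀:ℤ):ℝ)| ≤ (d:ℝ) := by
        have : ((|ℓ₀| : ℤ) : ℝ) ≤ (d:ℝ) := by exact_mod_cast hℓ₀
        calc |((ℓ₀:ℤ):ℝ)| = ((|ℓ₀| : ℤ) : ℝ) := by push_cast; simp
        _ ≤ (d:ℝ) := this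
      have hXlb : a * (2*m+1) - d ≤ X := by
        have h1 : |((k * (2 * (m:ℤ) + 1) : ℤ) : ℝ)| = a * (2*(m:ℝ)+1) := by
          push_cast
          rw [abs_mul, ha]
          congr 1
          rw [abs_of_pos (by positivity)]
        have h2 : |((k * (2 * (m:ℤ) + 1) : ℤ) : ℝ)|
            ≤ X + |((ℓ₀:ℤ):ℝ)| := by
          rw [hX]
          have : ((k * (2 * (m:ℤ) + 1) : ℤ) : ℝ)
              = ((ℓ₀ + k * (2 * (m:ℤ) + 1) : ℤ) : ℝ) - ((ℓ₀:ℤ):ℝ) := by push_cast; ring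
          rw [this]
          exact abs_sub _ _
        rw [h1] at h2
        linarith
      have hx : a * m / ((d:ℝ)+1) ≤ 1 + X := by
        rcases le_or_gt (a*(2*(m:ℝ)+1)) ((d:ℝ)+1) with hc | hc
        · have h1 : a * m ≤ (d:ℝ)+1 := by nlinarith
          rw [div_le_iff₀ (by positivity)]
          nlinarith
        · rw [div_le_iff₀ (by positivity)]
          nlinarith
      have hpos : (0:ℝ) < a * m / ((d:ℝ)+1) := by positivity
      have hstep1 : ‖γ (ℓ₀ + k * (2 * (m:ℤ) + 1))‖ ≤ C₀ * (1 + X) ^ (-ς) := hγ _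
      have hstep2 : (1 + X) ^ (-ς) ≤ (a * m / ((d:ℝ)+1)) ^ (-ς) :=
        Real.rpow_le_rpow_of_nonpos hpos hx (by linarith)
      have hsplit : (a * m / ((d:ℝ)+1)) ^ (-ς)
          = a ^ (-ς) * (m:ℝ) ^ (-ς) * ((d:ℝ)+1) ^ ς := by
        rw [Real.div_rpow (by positivity) (by positivity),
          Real.mul_rpow (by positivity) (by positivity),
          Real.rpow_neg (by positivity : (0:ℝ) ≤ (d:ℝ)+1)]
        field_simp
      have hmle : (m:ℝ) ^ (-ς) ≤ 1 / m := by
        have := Real.rpow_le_rpow_of_exponent_le hm1 (by linarith : -ς ≤ -1)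
        rwa [Real.rpow_neg_one, ← one_div] at this
      calc ‖γ (ℓ₀ + k * (2 * (m:ℤ) + 1))‖ ≤ C₀ * (a * m / ((d:ℝ)+1)) ^ (-ς) := by
            refine hstep1.trans (mul_le_mul_of_nonneg_left hstep2 hC₀.le)
      _ = C₀ * ((d:ℝ)+1) ^ ς * a ^ (-ς) * (m:ℝ) ^ (-ς) := by rw [hsplit]; ring
      _ ≤ C₀ * ((d:ℝ)+1) ^ ς * a ^ (-ς) * (1/m) := by
            refine mul_le_mul_of_nonneg_left hmle ?_
            have : (0:ℝ) ≤ a ^ (-ς) := Real.rpow_nonneg (by positivity) _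
            positivity
      _ = (C₀ * ((d:ℝ) + 1) ^ ς / m) * a ^ (-ς) := by ring
  have hHS : HasSum (fun k : ℤ => (C₀ * ((d:ℝ) + 1) ^ ς / m) * |(k:ℝ)| ^ (-ς))
      ((C₀ * ((d:ℝ) + 1) ^ ς / m) * S) := hSsum.hasSum.mul_left _
  refine (tsum_of_norm_bounded hHS hbound).trans (le_of_eq ?_)
  ring
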